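/- Pathwise optimality of earliest-deadline-first scheduling: for every x ∈ ℝ₊^N and s ∈ ℝ₊^N, the minimum of the firm usage Σ_{k=0}^{N−1} Σ_{j=1}^N v_k^j over all feasible schedules (u, v) for (x, s) equals Σ_{k=1}^N max{0, −ξ_k(x, s)}, and this minimum is attained (by the EDF schedule). -/

import Mathlib

/-- The residual process: `ξ_0 = 0`, `ξ_{k+1} = max{0, ξ_k} + s_k - x_{k+1}`. -/
noncomputable def resid (x s : ℕ → ℝ) : ℕ → ℝ
  | 0 => 0
  | k + 1 => max 0 (resid x s k) + s k - x (k + 1)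

/-- A feasible schedule for demand `x` (classes `j = 1,…,N`, class `j` must be exactly
served by its deadline `j`) and supply `s` (periods `k = 0,…,N-1`). -/
def FeasibleSchedule (N : ℕ) (x s : ℕ → ℝ) (u v : ℕ → ℕ → ℝ) : Prop :=
  (∀ k, k < N → ∀ j, 1 ≤ j → j ≤ N → 0 ≤ u k j ∧ 0 ≤ v k j) ∧
  (∀ k, k < N → ∀ j, 1 ≤ j → j ≤ N → j ≤ k → u k j = 0 ∧ v k j = 0) ∧
  (∀ k, k < N → ∑ j ∈ Finset.Icc 1 N, u k j ≤ s k) ∧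
  (∀ j, 1 ≤ j → j ≤ N → ∑ t ∈ Finset.range j, (u t j + v t j) = x j)

/-- firm purchase of EDF at the end of period `k-1` -/
noncomputable def Dd (x s : ℕ → ℝ) (k : ℕ) : ℝ := max 0 (-(resid x s k))

/-- cumulative supply over periods `0..k-1` -/
noncomputable def Cc (s : ℕ → ℝ) (k : ℕ) : ℝ := ∑ t ∈ Finset.range k, s t

/-- cumulative supply used by EDF for classes `1..j` -/
noncomputable def Uu (x s : ℕ → ℝ) (j : ℕ) : ℝ := ∑ i ∈ Finset.Icc 1 j, (x i - Dd x s i)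

noncomputable def uEDF (x s : ℕ → ℝ) (k j : ℕ) : ℝ :=
  max 0 (min (Uu x s j) (Cc s (k+1)) - max (Uu x s (j-1)) (Cc s k))

noncomputable def vEDF (x s : ℕ → ℝ) (k j : ℕ) : ℝ := if k + 1 = j then Dd x s j else 0

lemma overlap (a b c d : ℝ) (hab : a ≤ b) (hcd : c ≤ d) :
    max 0 (min b d - max a c) = max a (min b d) - max a (min b c) := by
  simp only [max_def, min_def]
  split_ifs <;> linarith

lemma tele (f : ℕ → ℝ) (n : ℕ) : ∑ j ∈ Finset.Icc 1 n, (f j - f (j-1)) = f n - f 0 := by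
  induction n with
  | zero => simp
  | succ n ih =>
    rw [Finset.sum_Icc_succ_top (by omega), ih]
    simp [Nat.succ_sub_one]

lemma icc_range (f : ℕ → ℝ) (n : ℕ) :
    ∑ j ∈ Finset.Icc 1 n, f j = ∑ k ∈ Finset.range n, f (k+1) := by
  induction n with
  | zero => simp
  | succ n ih => rw [Finset.sum_Icc_succ_top (by omega), Finset.sum_range_succ, ih]

lemma max_neg_eq (r : ℝ) : max 0 (-r) = max 0 r - r := by
  rcases le_total 0 r with h | h
  · rw [max_eq_left (by linarith), max_eq_right h]; ring
  · rw [max_eq_right (by linarith), max_eq_left h]; ring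

lemma key (x s : ℕ → ℝ) (m : ℕ) :
    ∑ k ∈ Finset.Icc 1 m, Dd x s k =
      max 0 (resid x s m) + ∑ j ∈ Finset.Icc 1 m, x j - Cc s m := by
  induction m with
  | zero => simp [resid, Cc]
  | succ m ih =>
    rw [Finset.sum_Icc_succ_top (by omega), ih,
      Finset.sum_Icc_succ_top (by omega : 1 ≤ m + 1)]
    have hC : Cc s (m+1) = Cc s m + s m := Finset.sum_range_succ _ _
    have hr : resid x s (m+1) = max 0 (resid x s m) + s m - x (m+1) := rfl
    have hD : Dd x s (m+1) = max 0 (resid x s (m+1)) - resid x s (m+1) :=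
      max_neg_eq _
    rw [hC, hD, hr]; ring

lemma Uu_eq (x s : ℕ → ℝ) (m : ℕ) :
    Uu x s m = Cc s m - max 0 (resid x s m) := by
  have h := key x s m
  have : Uu x s m = ∑ j ∈ Finset.Icc 1 m, x j - ∑ k ∈ Finset.Icc 1 m, Dd x s k := by
    rw [Uu, Finset.sum_sub_distrib]
  rw [this, h]; ring

/-- Pathwise optimality of earliest-deadline-first scheduling: for every
`x ∈ ℝ₊^N` and `s ∈ ℝ₊^N`, the minimum of the firm usage `Σ_{k=0}^{N-1} Σ_{j=1}^N v_k^j`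
over all feasible schedules `(u, v)` for `(x, s)` equals `Σ_{k=1}^N max{0, -ξ_k(x, s)}`,
and this minimum is attained (by the EDF schedule). -/
theorem edf_schedule_optimal
    (N : ℕ) (hN : 1 ≤ N) (x s : ℕ → ℝ)
    (hx : ∀ j, 1 ≤ j → j ≤ N → 0 ≤ x j)
    (hs : ∀ k, k < N → 0 ≤ s k) :
    IsLeast
      {c : ℝ | ∃ u v : ℕ → ℕ → ℝ, FeasibleSchedule N x s u v ∧
        c = ∑ k ∈ Finset.range N, ∑ j ∈ Finset.Icc 1 N, v k j}
      (∑ k ∈ Finset.Icc 1 N, max 0 (-(resid x s k))) := by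
  -- basic facts
  have hDnn : ∀ k, 0 ≤ Dd x s k := fun k => le_max_left _ _
  have hCmono : ∀ a b : ℕ, a ≤ b → b ≤ N → Cc s a ≤ Cc s b := by
    intro a b hab hbN
    apply Finset.sum_le_sum_of_subset_of_nonneg (Finset.range_subset_range.2 hab)
    intro t ht _
    exact hs t (lt_of_lt_of_le (Finset.mem_range.1 ht) hbN)
  have hC0 : Cc s 0 = 0 := by simp [Cc]
  have hCnn : ∀ k, k ≤ N → 0 ≤ Cc s k := fun k hk => hC0 ▸ hCmono 0 k (Nat.zero_le _) hk
  have hU0 : Uu x s 0 = 0 := by simp [Uu]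
  have hUstep : ∀ m : ℕ, Uu x s (m+1) = Uu x s m + (x (m+1) - Dd x s (m+1)) := by
    intro m
    rw [Uu, Uu, Finset.sum_Icc_succ_top (by omega : 1 ≤ m + 1)]
  have hDle : ∀ j, 1 ≤ j → j ≤ N → Dd x s j ≤ x j := by
    intro j hj1 hjN
    obtain ⟨m, rfl⟩ : ∃ m, j = m + 1 := ⟨j - 1, by omega⟩
    have hr : resid x s (m+1) = max 0 (resid x s m) + s m - x (m+1) := rfl
    have hsm : 0 ≤ s m := hs m (by omega)
    have h0 : 0 ≤ max 0 (resid x s m) := le_max_left _ _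
    have hx1 : 0 ≤ x (m+1) := hx (m+1) hj1 hjN
    rw [Dd]
    apply max_le hx1
    rw [hr]; linarith
  have hUmono : ∀ a b : ℕ, a ≤ b → b ≤ N → Uu x s a ≤ Uu x s b := by
    intro a b hab hbN
    induction b with
    | zero =>
      have : a = 0 := Nat.le_zero.mp hab
      subst this
      exact le_refl _
    | succ b ih =>
      rcases Nat.eq_or_lt_of_le hab with rfl | hlt
      · exact le_refl _
      · have h1 : Uu x s a ≤ Uu x s b := ih (by omega) (by omega)
        have h2 : Dd x s (b+1) ≤ x (b+1) := hDle (b+1) (by omega) hbN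
        rw [hUstep b]; linarith
  have hUnn : ∀ j, j ≤ N → 0 ≤ Uu x s j := fun j hj =>
    hU0 ▸ hUmono 0 j (Nat.zero_le _) hj
  have hUleC : ∀ j, Uu x s j ≤ Cc s j := by
    intro j; rw [Uu_eq]
    have : 0 ≤ max 0 (resid x s j) := le_max_left _ _
    linarith
  constructor
  · -- membership: EDF schedule attains the value
    refine ⟨uEDF x s, vEDF x s, ⟨?_, ?_, ?_, ?_⟩, ?_⟩
    · intro k hk j hj1 hjN
      constructor
      · exact le_max_left _ _
      · rw [vEDF]; split_ifs with h
        · exact hDnn j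
        · exact le_refl 0
    · intro k hk j hj1 hjN hjk
      constructor
      · rw [uEDF]
        apply max_eq_left
        have h1 : min (Uu x s j) (Cc s (k+1)) ≤ Uu x s j := min_le_left _ _
        have h2 : Uu x s j ≤ Cc s j := hUleC j
        have h3 : Cc s j ≤ Cc s k := hCmono j k hjk (by omega)
        have h4 : Cc s k ≤ max (Uu x s (j-1)) (Cc s k) := le_max_right _ _
        linarith
      · rw [vEDF, if_neg (by omega)]
    · -- supply constraint
      intro k hk
      have hcongr : ∀ j ∈ Finset.Icc 1 N, uEDF x s k j =
          max (Cc s k) (min (Cc s (k+1)) (Uu x s j)) -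
          max (Cc s k) (min (Cc s (k+1)) (Uu x s (j-1))) := by
        intro j hj
        rw [Finset.mem_Icc] at hj
        rw [uEDF, min_comm, max_comm (Uu x s (j-1))]
        exact overlap (Cc s k) (Cc s (k+1)) (Uu x s (j-1)) (Uu x s j)
          (by have := hs k hk; rw [Cc, Cc, Finset.sum_range_succ]; linarith)
          (hUmono (j-1) j (by omega) hj.2)
      rw [Finset.sum_congr rfl hcongr,
        tele (fun j => max (Cc s k) (min (Cc s (k+1)) (Uu x s j))) N]
      have hg0 : max (Cc s k) (min (Cc s (k+1)) (Uu x s 0)) = Cc s k := by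
        rw [hU0]
        apply max_eq_left
        have : min (Cc s (k+1)) 0 ≤ 0 := min_le_right _ _
        have := hCnn k (by omega)
        linarith
      have hgN : max (Cc s k) (min (Cc s (k+1)) (Uu x s N)) ≤ Cc s (k+1) := by
        apply max_le (hCmono k (k+1) (by omega) (by omega)) (min_le_left _ _)
      have hCk : Cc s (k+1) = Cc s k + s k := Finset.sum_range_succ _ _
      rw [hg0]; linarith
    · -- demand constraint
      intro j hj1 hjN
      rw [Finset.sum_add_distrib]
      have hu : ∑ t ∈ Finset.range j, uEDF x s t j = Uu x s j - Uu x s (j-1) := by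
        have hcongr : ∀ t ∈ Finset.range j, uEDF x s t j =
            max (Uu x s (j-1)) (min (Uu x s j) (Cc s (t+1))) -
            max (Uu x s (j-1)) (min (Uu x s j) (Cc s t)) := by
          intro t ht
          rw [Finset.mem_range] at ht
          rw [uEDF]
          exact overlap (Uu x s (j-1)) (Uu x s j) (Cc s t) (Cc s (t+1))
            (hUmono (j-1) j (by omega) hjN)
            (by have := hs t (by omega); rw [Cc, Cc, Finset.sum_range_succ]; linarith)
        rw [Finset.sum_congr rfl hcongr,
          Finset.sum_range_sub (fun t => max (Uu x s (j-1)) (min (Uu x s j) (Cc s t))) j]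
        have h1 : max (Uu x s (j-1)) (min (Uu x s j) (Cc s 0)) = Uu x s (j-1) := by
          rw [hC0]
          apply max_eq_left
          have : min (Uu x s j) 0 ≤ 0 := min_le_right _ _
          have := hUnn (j-1) (by omega)
          linarith
        have h2 : max (Uu x s (j-1)) (min (Uu x s j) (Cc s j)) = Uu x s j := by
          rw [min_eq_left (hUleC j)]
          exact max_eq_right (hUmono (j-1) j (by omega) hjN)
        rw [h1, h2]
      have hv : ∑ t ∈ Finset.range j, vEDF x s t j = Dd x s j := by
        obtain ⟨m, rfl⟩ : ∃ m, j = m + 1 := ⟨j - 1, by omega⟩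
        simp only [vEDF, Nat.add_right_cancel_iff]
        rw [Finset.sum_ite_eq' (Finset.range (m+1)) m (fun _ => Dd x s (m+1))]
        simp
      rw [hu, hv]
      obtain ⟨m, rfl⟩ : ∃ m, j = m + 1 := ⟨j - 1, by omega⟩
      have := hUstep m
      simp only [Nat.add_sub_cancel]
      linarith
    · -- value of EDF schedule
      have hinner : ∀ k ∈ Finset.range N, ∑ j ∈ Finset.Icc 1 N, vEDF x s k j
          = Dd x s (k+1) := by
        intro k hk
        rw [Finset.mem_range] at hk
        simp only [vEDF]
        rw [Finset.sum_ite_eq (Finset.Icc 1 N) (k+1) (fun j => Dd x s j)]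
        rw [if_pos (Finset.mem_Icc.2 ⟨by omega, by omega⟩)]
      rw [Finset.sum_congr rfl hinner, ← icc_range (fun k => Dd x s k) N]
      rfl
  · -- lower bound
    rintro c ⟨u, v, ⟨h1, h2, h3, h4⟩, rfl⟩
    set V := ∑ k ∈ Finset.range N, ∑ j ∈ Finset.Icc 1 N, v k j with hV
    have hvnn : ∀ t, t < N → 0 ≤ ∑ j ∈ Finset.Icc 1 N, v t j := by
      intro t ht
      apply Finset.sum_nonneg
      intro j hj
      rw [Finset.mem_Icc] at hj
      exact (h1 t ht j hj.1 hj.2).2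
    have hVnn : 0 ≤ V := by
      apply Finset.sum_nonneg
      intro t ht
      exact hvnn t (Finset.mem_range.1 ht)
    have stepA : ∀ m, m ≤ N → ∑ j ∈ Finset.Icc 1 m, x j ≤ Cc s m + V := by
      intro m hm
      have e1 : ∑ j ∈ Finset.Icc 1 m, x j =
          ∑ j ∈ Finset.Icc 1 m, ∑ t ∈ Finset.range m, (u t j + v t j) := by
        apply Finset.sum_congr rfl
        intro j hj
        rw [Finset.mem_Icc] at hj
        rw [← h4 j hj.1 (le_trans hj.2 hm)]
        apply Finset.sum_subset (Finset.range_subset_range.2 hj.2)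
        intro t ht hnt
        rw [Finset.mem_range] at ht hnt
        have := h2 t (by omega) j hj.1 (le_trans hj.2 hm) (by omega)
        rw [this.1, this.2]; ring
      rw [e1, Finset.sum_comm]
      have e2 : ∀ t ∈ Finset.range m, ∑ j ∈ Finset.Icc 1 m, (u t j + v t j)
          ≤ s t + ∑ j ∈ Finset.Icc 1 N, v t j := by
        intro t ht
        rw [Finset.mem_range] at ht
        rw [Finset.sum_add_distrib]
        have hu1 : ∑ j ∈ Finset.Icc 1 m, u t j ≤ ∑ j ∈ Finset.Icc 1 N, u t j := by
          apply Finset.sum_le_sum_of_subset_of_nonneg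
            (Finset.Icc_subset_Icc_right hm)
          intro j hj _
          rw [Finset.mem_Icc] at hj
          exact (h1 t (by omega) j hj.1 hj.2).1
        have hu2 := h3 t (by omega)
        have hv1 : ∑ j ∈ Finset.Icc 1 m, v t j ≤ ∑ j ∈ Finset.Icc 1 N, v t j := by
          apply Finset.sum_le_sum_of_subset_of_nonneg
            (Finset.Icc_subset_Icc_right hm)
          intro j hj _
          rw [Finset.mem_Icc] at hj
          exact (h1 t (by omega) j hj.1 hj.2).2
        linarith
      calc ∑ t ∈ Finset.range m, ∑ j ∈ Finset.Icc 1 m, (u t j + v t j)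
          ≤ ∑ t ∈ Finset.range m, (s t + ∑ j ∈ Finset.Icc 1 N, v t j) :=
            Finset.sum_le_sum e2
        _ = Cc s m + ∑ t ∈ Finset.range m, ∑ j ∈ Finset.Icc 1 N, v t j := by
            rw [Finset.sum_add_distrib]; rfl
        _ ≤ Cc s m + V := by
            apply add_le_add (le_refl _)
            apply Finset.sum_le_sum_of_subset_of_nonneg (Finset.range_subset_range.2 hm)
            intro t ht _
            exact hvnn t (Finset.mem_range.1 ht)
    have stepB : ∀ n, n ≤ N → ∑ k ∈ Finset.Icc 1 n, Dd x s k ≤ V := by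
      intro n
      induction n with
      | zero => intro _; simpa using hVnn
      | succ n ih =>
        intro hn
        rcases le_or_gt 0 (resid x s (n+1)) with hr | hr
        · have hD0 : Dd x s (n+1) = 0 := max_eq_left (by linarith)
          rw [Finset.sum_Icc_succ_top (by omega), hD0, add_zero]
          exact ih (by omega)
        · have hσ : max 0 (resid x s (n+1)) = 0 := max_eq_left (by linarith)
          have hk := key x s (n+1)
          have hA := stepA (n+1) hn
          rw [hk, hσ]; linarith
    have := stepB N (le_refl N)
    calc ∑ k ∈ Finset.Icc 1 N, max 0 (-(resid x s k))
        = ∑ k ∈ Finset.Icc 1 N, Dd x s k := rfl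
      _ ≤ V := this
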